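/- Completeness of DmbCcl with respect to swap Kripke models: for every set of formulas Γ ∪ {φ} ⊆ For(Σ), if Γ ⊨_DmbCcl φ then Γ ⊢_DmbCcl φ. -/
import Mathlib


/-- Formulas over the signature Σ = {∧, ∨, →, ¬, ∘, O}, with countably many
propositional variables. -/
inductive Form : Type
  | var : ℕ → Form
  | and : Form → Form → Form
  | or : Form → Form → Form
  | imp : Form → Form → Form
  | neg : Form → Form
  | circ : Form → Form
  | obl : Form → Form

namespace Form
/-- ⊥_α := (α ∧ ¬α) ∧ ∘α -/
def bot (α : Form) : Form := (α.and α.neg).and α.circ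
end Form

/-- Theorems of DmbCcl: the DmbC axioms (CPL⁺, (EM), (bc), (O-K), (O-E)) plus the
da Costa axiom (cl) ¬(α ∧ ¬α) → ∘α, with Modus Ponens and O-necessitation. -/
inductive ThmDmbCcl : Form → Prop
  | A1 (α β : Form) : ThmDmbCcl (α.imp (β.imp α))
  | A2 (α β γ : Form) : ThmDmbCcl ((α.imp (β.imp γ)).imp ((α.imp β).imp (α.imp γ)))
  | A3 (α β : Form) : ThmDmbCcl (α.imp (β.imp (α.and β)))
  | A4 (α β : Form) : ThmDmbCcl ((α.and β).imp α)
  | A5 (α β : Form) : ThmDmbCcl ((α.and β).imp β)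
  | A6 (α β : Form) : ThmDmbCcl (α.imp (α.or β))
  | A7 (α β : Form) : ThmDmbCcl (β.imp (α.or β))
  | A8 (α β γ : Form) : ThmDmbCcl ((α.imp γ).imp ((β.imp γ).imp ((α.or β).imp γ)))
  | A9 (α β : Form) : ThmDmbCcl (((α.imp β).imp α).imp α)
  | EM (α : Form) : ThmDmbCcl (α.or α.neg)
  | bc (α β : Form) : ThmDmbCcl (α.circ.imp (α.imp (α.neg.imp β)))
  | cl (α : Form) : ThmDmbCcl ((α.and α.neg).neg.imp α.circ)
  | OK (α β : Form) : ThmDmbCcl ((α.imp β).obl.imp (α.obl.imp β.obl))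
  | OE (α : Form) : ThmDmbCcl (α.bot.obl.imp α.bot)
  | mp {α β : Form} : ThmDmbCcl (α.imp β) → ThmDmbCcl α → ThmDmbCcl β
  | nec {α : Form} : ThmDmbCcl α → ThmDmbCcl α.obl

/-- conj γ [γ₂,…,γ_k] = γ ∧ γ₂ ∧ … ∧ γ_k -/
def conj (γ : Form) : List Form → Form
  | [] => γ
  | δ :: l => γ.and (conj δ l)

/-- Γ ⊢_DmbCcl φ iff ⊢ φ or ⊢ (γ₁ ∧ … ∧ γ_k) → φ for some γ₁,…,γ_k ∈ Γ, k ≥ 1. -/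
def DerivDmbCcl (Γ : Set Form) (φ : Form) : Prop :=
  ThmDmbCcl φ ∨ ∃ (γ : Form) (l : List Form),
    (∀ δ ∈ γ :: l, δ ∈ Γ) ∧ ThmDmbCcl ((conj γ l).imp φ)

/-- The three snapshots T = (1,0), t = (1,1), F = (0,1). -/
inductive SV : Type
  | T | t | F
deriving DecidableEq

/-- First coordinate of a snapshot. -/
def SV.p1 : SV → Bool
  | .T => true | .t => true | .F => false

/-- Second coordinate of a snapshot. -/
def SV.p2 : SV → Bool
  | .T => false | .t => true | .F => true

/-- Designated values: D = {T, t}, i.e. first coordinate is 1. -/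
def SV.desig (a : SV) : Prop := a.p1 = true

/-- Swap Kripke model conditions for DmbCcl on a serial frame (W,R):
the DmbCciw conditions (with ∘ interpreted by ∘̃₁) plus the restriction
that v_w(α) = t implies v_w(α ∧ ¬α) = T. -/
structure IsModelDmbCcl {W : Type} (R : W → W → Prop) (v : W → Form → SV) : Prop where
  serial : ∀ w, ∃ w', R w w'
  and_ : ∀ w α β, (v w (α.and β)).p1 = ((v w α).p1 && (v w β).p1)
  or_ : ∀ w α β, (v w (α.or β)).p1 = ((v w α).p1 || (v w β).p1)
  imp_ : ∀ w α β, (v w (α.imp β)).p1 = (!(v w α).p1 || (v w β).p1)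
  neg_ : ∀ w α, (v w α.neg).p1 = (v w α).p2
  circ_ : ∀ w α, (v w α.circ).p1 = !((v w α).p1 && (v w α).p2)
  obl_ : ∀ w α, ((v w α.obl).p1 = true ↔ ∀ w', R w w' → (v w' α).p1 = true)
  cl_ : ∀ w α, v w α = SV.t → v w (α.and α.neg) = SV.T

/-- Γ ⊨_DmbCcl φ : semantic consequence over all swap Kripke models for DmbCcl. -/
def SemDmbCcl (Γ : Set Form) (φ : Form) : Prop :=
  ∀ (W : Type) (R : W → W → Prop) (v : W → Form → SV), Nonempty W →
    IsModelDmbCcl R v → ∀ w : W, (∀ γ ∈ Γ, (v w γ).desig) → (v w φ).desig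

section Aux

open ThmDmbCcl

/-- Derivability with hypotheses (natural Hilbert-style). -/
inductive Der (Γ : Set Form) : Form → Prop
  | ax {φ} : φ ∈ Γ → Der Γ φ
  | thm {φ} : ThmDmbCcl φ → Der Γ φ
  | mp {α β} : Der Γ (α.imp β) → Der Γ α → Der Γ β

theorem tmp2 {α β γ : Form} (h1 : ThmDmbCcl (α.imp (β.imp γ)))
    (h2 : ThmDmbCcl (α.imp β)) : ThmDmbCcl (α.imp γ) :=
  mp (mp (A2 α β γ) h1) h2

theorem tconst {α β : Form} (h : ThmDmbCcl β) : ThmDmbCcl (α.imp β) :=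
  mp (A1 β α) h

theorem tid (α : Form) : ThmDmbCcl (α.imp α) :=
  tmp2 (A1 α (α.imp α)) (A1 α α)

theorem tcomp {α β γ : Form} (h1 : ThmDmbCcl (α.imp β)) (h2 : ThmDmbCcl (β.imp γ)) :
    ThmDmbCcl (α.imp γ) :=
  tmp2 (tconst h2) h1

theorem tpair {α β γ : Form} (h1 : ThmDmbCcl (α.imp β)) (h2 : ThmDmbCcl (α.imp γ)) :
    ThmDmbCcl (α.imp (β.and γ)) :=
  tmp2 (tmp2 (tconst (A3 β γ)) h1) h2

theorem Der.mono {Γ Γ' : Set Form} {φ : Form} (hs : Γ ⊆ Γ') (h : Der Γ φ) : Der Γ' φ := by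
  induction h with
  | ax h => exact Der.ax (hs h)
  | thm h => exact Der.thm h
  | mp _ _ ih1 ih2 => exact Der.mp ih1 ih2

theorem ded {Γ : Set Form} {α β : Form} (h : Der (insert α Γ) β) : Der Γ (α.imp β) := by
  induction h with
  | @ax φ h =>
    rcases h with h | h
    · rw [h]; exact Der.thm (tid α)
    · exact Der.mp (Der.thm (A1 φ α)) (Der.ax h)
  | @thm φ h => exact Der.mp (Der.thm (A1 φ α)) (Der.thm h)
  | @mp β γ _ _ ih1 ih2 =>
    exact Der.mp (Der.mp (Der.thm (A2 α β γ)) ih1) ih2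

theorem derEmpty {φ : Form} (h : Der ∅ φ) : ThmDmbCcl φ := by
  induction h with
  | ax h => exact absurd h (Set.notMem_empty _)
  | thm h => exact h
  | mp _ _ ih1 ih2 => exact mp ih1 ih2

/-- conj projections over appended lists -/
theorem conj_proj1 (γ₁ γ₂ : Form) (l₁ l₂ : List Form) :
    ThmDmbCcl ((conj γ₁ (l₁ ++ γ₂ :: l₂)).imp (conj γ₁ l₁)) := by
  induction l₁ generalizing γ₁ with
  | nil => exact A4 γ₁ (conj γ₂ l₂)
  | cons δ r ih => exact tpair (A4 _ _) (tcomp (A5 _ _) (ih δ))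

theorem conj_proj2 (γ₁ γ₂ : Form) (l₁ l₂ : List Form) :
    ThmDmbCcl ((conj γ₁ (l₁ ++ γ₂ :: l₂)).imp (conj γ₂ l₂)) := by
  induction l₁ generalizing γ₁ with
  | nil => exact A5 γ₁ (conj γ₂ l₂)
  | cons δ r ih => exact tcomp (A5 _ _) (ih δ)

theorem derToConj {Γ : Set Form} {φ : Form} (h : Der Γ φ) :
    ThmDmbCcl φ ∨ ∃ (γ : Form) (l : List Form),
      (∀ δ ∈ γ :: l, δ ∈ Γ) ∧ ThmDmbCcl ((conj γ l).imp φ) := by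
  induction h with
  | @ax φ h =>
    exact Or.inr ⟨φ, [], by simpa using h, tid φ⟩
  | thm h => exact Or.inl h
  | @mp α β _ _ ih1 ih2 =>
    rcases ih1 with h1 | ⟨γ₁, l₁, hm1, h1⟩
    · rcases ih2 with h2 | ⟨γ₂, l₂, hm2, h2⟩
      · exact Or.inl (mp h1 h2)
      · exact Or.inr ⟨γ₂, l₂, hm2, tcomp h2 h1⟩
    · rcases ih2 with h2 | ⟨γ₂, l₂, hm2, h2⟩
      · exact Or.inr ⟨γ₁, l₁, hm1, tmp2 h1 (tconst h2)⟩
      · refine Or.inr ⟨γ₁, l₁ ++ γ₂ :: l₂, ?_, ?_⟩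
        · intro δ hδ
          rcases List.mem_cons.1 hδ with h | h
          · exact hm1 δ (by simp [h])
          · rcases List.mem_append.1 h with h | h
            · exact hm1 δ (by simp [h])
            · exact hm2 δ h
        · exact tmp2 (tcomp (conj_proj1 γ₁ γ₂ l₁ l₂) h1)
            (tcomp (conj_proj2 γ₁ γ₂ l₁ l₂) h2)

theorem derConj {Γ : Set Form} {γ : Form} {l : List Form}
    (hm : ∀ δ ∈ γ :: l, δ ∈ Γ) : Der Γ (conj γ l) := by
  induction l generalizing γ with
  | nil => exact Der.ax (hm γ (by simp))
  | cons δ r ih =>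
    exact Der.mp (Der.mp (Der.thm (A3 _ _)) (Der.ax (hm γ (by simp))))
      (ih (fun x hx => hm x (by
        rcases List.mem_cons.1 hx with h | h
        · simp [h]
        · simp [h])))

theorem conjToDer {Γ : Set Form} {γ φ : Form} {l : List Form}
    (hm : ∀ δ ∈ γ :: l, δ ∈ Γ) (h : ThmDmbCcl ((conj γ l).imp φ)) : Der Γ φ :=
  Der.mp (Der.thm h) (derConj hm)

theorem derToDeriv {Γ : Set Form} {φ : Form} (h : Der Γ φ) : DerivDmbCcl Γ φ :=
  derToConj h

theorem Der.finite {Γ : Set Form} {φ : Form} (h : Der Γ φ) :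
    ∃ L : List Form, (∀ δ ∈ L, δ ∈ Γ) ∧ Der {x | x ∈ L} φ := by
  rcases derToConj h with h | ⟨γ, l, hm, h⟩
  · exact ⟨[], by simp, Der.thm h⟩
  · exact ⟨γ :: l, hm, conjToDer (fun δ hδ => hδ) h⟩

/-- ⊢ α ∨ (α → β) -/
theorem thm_or_imp (α β : Form) : ThmDmbCcl (α.or (α.imp β)) := by
  set D := α.or (α.imp β) with hD
  have h1 : Der (insert (D.imp α) ∅) D := by
    have hα : Der (insert (D.imp α) ∅) α := by
      refine Der.mp (Der.thm (A9 α β)) ?_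
      exact Der.mp (Der.mp (Der.thm (A2 (α.imp β) D α)) (Der.mp
        (Der.thm (A1 (D.imp α) (α.imp β))) (Der.ax (Set.mem_insert _ _))))
        (Der.thm (A7 α (α.imp β)))
    exact Der.mp (Der.thm (A6 α (α.imp β))) hα
  exact mp (A9 D α) (derEmpty (ded h1))

/-- explosion from ⊥_α -/
theorem thm_bot_imp (α β : Form) : ThmDmbCcl ((Form.bot α).imp β) := by
  have h : Der (insert (Form.bot α) ∅) β := by
    have hb : Der (insert (Form.bot α) ∅) (Form.bot α) := Der.ax (Set.mem_insert _ _)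
    have hc : Der (insert (Form.bot α) ∅) α.circ := Der.mp (Der.thm (A5 _ _)) hb
    have han : Der (insert (Form.bot α) ∅) (α.and α.neg) := Der.mp (Der.thm (A4 _ _)) hb
    have ha : Der (insert (Form.bot α) ∅) α := Der.mp (Der.thm (A4 _ _)) han
    have hn : Der (insert (Form.bot α) ∅) α.neg := Der.mp (Der.thm (A5 _ _)) han
    exact Der.mp (Der.mp (Der.mp (Der.thm (bc α β)) hc) ha) hn
  exact derEmpty (ded h)

/-- O-distribution over conjunctions -/
theorem oblPair (γ x : Form) : ThmDmbCcl (γ.obl.imp (x.obl.imp ((γ.and x).obl))) :=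
  tcomp (mp (OK γ (x.imp (γ.and x))) (nec (A3 γ x))) (OK x (γ.and x))

theorem conjObl (γ : Form) (l : List Form) :
    ThmDmbCcl ((conj γ.obl (l.map Form.obl)).imp (conj γ l).obl) := by
  induction l generalizing γ with
  | nil => exact tid _
  | cons δ r ih =>
    exact tmp2 (tcomp (A4 _ _) (oblPair γ (conj δ r))) (tcomp (A5 _ _) (ih δ))

theorem oblConj {γ β : Form} {l : List Form} (h : ThmDmbCcl ((conj γ l).imp β)) :
    ThmDmbCcl ((conj γ.obl (l.map Form.obl)).imp β.obl) :=
  tcomp (conjObl γ l) (mp (OK _ _) (nec h))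

/-! ### Worlds -/

structure World where
  s : Set Form
  w : Form
  nd : ¬ Der s w
  max : ∀ β, β ∉ s → Der (insert β s) w

namespace World

theorem clos (Δ : World) {β : Form} (h : Der Δ.s β) : β ∈ Δ.s := by
  by_contra hβ
  exact Δ.nd (Der.mp (ded (Δ.max β hβ)) h)

theorem disj (Δ : World) {α β : Form} (h : (α.or β) ∈ Δ.s) : α ∈ Δ.s ∨ β ∈ Δ.s := by
  by_contra hab
  push_neg at hab
  have h1 : Der Δ.s (α.imp Δ.w) := ded (Δ.max α hab.1)
  have h2 : Der Δ.s (β.imp Δ.w) := ded (Δ.max β hab.2)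
  exact Δ.nd (Der.mp (Der.mp (Der.mp (Der.thm (A8 α β Δ.w)) h1) h2) (Der.ax h))

theorem em (Δ : World) (α : Form) : α ∈ Δ.s ∨ α.neg ∈ Δ.s :=
  Δ.disj (Δ.clos (Der.thm (EM α)))

theorem neg_of_notMem (Δ : World) {α : Form} (h : α ∉ Δ.s) : α.neg ∈ Δ.s :=
  (Δ.em α).resolve_left h

theorem and_mem (Δ : World) (α β : Form) :
    (α.and β) ∈ Δ.s ↔ α ∈ Δ.s ∧ β ∈ Δ.s := by
  constructor
  · intro h
    exact ⟨Δ.clos (Der.mp (Der.thm (A4 α β)) (Der.ax h)),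
      Δ.clos (Der.mp (Der.thm (A5 α β)) (Der.ax h))⟩
  · rintro ⟨h1, h2⟩
    exact Δ.clos (Der.mp (Der.mp (Der.thm (A3 α β)) (Der.ax h1)) (Der.ax h2))

theorem or_mem (Δ : World) (α β : Form) :
    (α.or β) ∈ Δ.s ↔ α ∈ Δ.s ∨ β ∈ Δ.s := by
  constructor
  · exact Δ.disj
  · rintro (h | h)
    · exact Δ.clos (Der.mp (Der.thm (A6 α β)) (Der.ax h))
    · exact Δ.clos (Der.mp (Der.thm (A7 α β)) (Der.ax h))

theorem imp_mem (Δ : World) (α β : Form) :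
    (α.imp β) ∈ Δ.s ↔ (α ∉ Δ.s ∨ β ∈ Δ.s) := by
  constructor
  · intro h
    by_cases hα : α ∈ Δ.s
    · exact Or.inr (Δ.clos (Der.mp (Der.ax h) (Der.ax hα)))
    · exact Or.inl hα
  · rintro (h | h)
    · rcases Δ.disj (Δ.clos (Der.thm (thm_or_imp α β))) with h' | h'
      · exact absurd h' h
      · exact h'
    · exact Δ.clos (Der.mp (Der.thm (A1 β α)) (Der.ax h))

theorem not_both (Δ : World) {α : Form} (h1 : α ∈ Δ.s) (h2 : α.neg ∈ Δ.s)
    (h3 : α.circ ∈ Δ.s) : False :=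
  Δ.nd (Der.mp (Der.mp (Der.mp (Der.thm (bc α Δ.w)) (Der.ax h3)) (Der.ax h1)) (Der.ax h2))

theorem circ_mem (Δ : World) (α : Form) :
    α.circ ∈ Δ.s ↔ ¬(α ∈ Δ.s ∧ α.neg ∈ Δ.s) := by
  constructor
  · rintro h ⟨h1, h2⟩
    exact Δ.not_both h1 h2 h
  · intro h
    have hna : (α.and α.neg) ∉ Δ.s := fun hc => h ((Δ.and_mem α α.neg).1 hc)
    exact Δ.clos (Der.mp (Der.thm (cl α)) (Der.ax (Δ.neg_of_notMem hna)))

theorem cl_mem (Δ : World) {α : Form} (h1 : α ∈ Δ.s) (h2 : α.neg ∈ Δ.s) :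
    (α.and α.neg) ∈ Δ.s ∧ (α.and α.neg).neg ∉ Δ.s := by
  refine ⟨(Δ.and_mem α α.neg).2 ⟨h1, h2⟩, fun hc => ?_⟩
  exact Δ.not_both h1 h2 (Δ.clos (Der.mp (Der.thm (cl α)) (Der.ax hc)))

end World

/-! ### Lindenbaum -/

theorem chain_finite_bound {c : Set (Set Form)} (hchain : IsChain (· ⊆ ·) c)
    (hne : c.Nonempty) (L : List Form) (hL : ∀ δ ∈ L, δ ∈ ⋃₀ c) :
    ∃ X ∈ c, ∀ δ ∈ L, δ ∈ X := by
  induction L with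
  | nil => exact ⟨hne.choose, hne.choose_spec, by simp⟩
  | cons δ r ih =>
    obtain ⟨X, hX, hXr⟩ := ih (fun x hx => hL x (by simp [hx]))
    obtain ⟨Y, hY, hδY⟩ := hL δ (by simp)
    rcases hchain.total hX hY with h | h
    · exact ⟨Y, hY, fun x hx => by
        rcases List.mem_cons.1 hx with h' | h'
        · exact h' ▸ hδY
        · exact h (hXr x h')⟩
    · exact ⟨X, hX, fun x hx => by
        rcases List.mem_cons.1 hx with h' | h'
        · exact h' ▸ h hδY
        · exact hXr x h'⟩

theorem lindenbaum {Γ : Set Form} {ψ : Form} (h : ¬ Der Γ ψ) :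
    ∃ Δ : World, Γ ⊆ Δ.s ∧ Δ.w = ψ := by
  obtain ⟨m, hΓm, hmS, hmax⟩ := zorn_subset_nonempty {X : Set Form | ¬ Der X ψ}
    (fun c hcS hchain hne => by
      refine ⟨⋃₀ c, ?_, fun s hs => Set.subset_sUnion_of_mem hs⟩
      intro hd
      obtain ⟨L, hL, hLd⟩ := hd.finite
      obtain ⟨X, hX, hXL⟩ := chain_finite_bound hchain hne L hL
      exact hcS hX (hLd.mono (fun x hx => hXL x hx))) Γ h
  refine ⟨⟨m, ψ, hmS, fun β hβ => ?_⟩, hΓm, rfl⟩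
  by_contra hnd
  exact hβ (hmax hnd (Set.subset_insert β m) (Set.mem_insert β m))

/-! ### Canonical model -/

def World.pre (Δ : World) : Set Form := {α | α.obl ∈ Δ.s}

theorem pre_der {Δ : World} {β : Form} (h : Der Δ.pre β) : β.obl ∈ Δ.s := by
  rcases derToConj h with h | ⟨γ, l, hm, h⟩
  · exact Δ.clos (Der.thm (ThmDmbCcl.nec h))
  · refine Δ.clos (conjToDer (γ := γ.obl) (l := l.map Form.obl) ?_ (oblConj h))
    intro δ hδ
    rcases List.mem_cons.1 hδ with h' | h'
    · exact h' ▸ hm γ (by simp)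
    · obtain ⟨x, hx, rfl⟩ := List.mem_map.1 h'
      exact hm x (by simp [hx])

def canR (Δ Δ' : World) : Prop := Δ.pre ⊆ Δ'.s

theorem pre_cons (Δ : World) : ¬ Der Δ.pre (Form.bot (Form.var 0)) := by
  intro h
  have h2 : (Form.bot (Form.var 0)).obl ∈ Δ.s := pre_der h
  have h3 : Der Δ.s (Form.bot (Form.var 0)) :=
    Der.mp (Der.thm (ThmDmbCcl.OE (Form.var 0))) (Der.ax h2)
  exact Δ.nd (Der.mp (Der.thm (thm_bot_imp (Form.var 0) Δ.w)) h3)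

theorem canR_serial (Δ : World) : ∃ Δ', canR Δ Δ' := by
  obtain ⟨Δ', hsub, _⟩ := lindenbaum (pre_cons Δ)
  exact ⟨Δ', hsub⟩

theorem obl_mem (Δ : World) (α : Form) :
    α.obl ∈ Δ.s ↔ ∀ Δ', canR Δ Δ' → α ∈ Δ'.s := by
  constructor
  · intro h Δ' hR
    exact hR h
  · intro h
    by_contra hO
    have hnd : ¬ Der Δ.pre α := fun hd => hO (pre_der hd)
    obtain ⟨Δ', hsub, hw⟩ := lindenbaum hnd
    exact Δ'.nd (hw ▸ Der.ax (h Δ' hsub))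

open Classical in
noncomputable def canV (Δ : World) (β : Form) : SV :=
  if β ∈ Δ.s then (if β.neg ∈ Δ.s then SV.t else SV.T) else SV.F

theorem canV_p1 (Δ : World) (β : Form) : (canV Δ β).p1 = true ↔ β ∈ Δ.s := by
  unfold canV
  split
  · split <;> simp_all [SV.p1]
  · simp_all [SV.p1]

theorem canV_p2 (Δ : World) (β : Form) : (canV Δ β).p2 = true ↔ β.neg ∈ Δ.s := by
  unfold canV
  split
  · split <;> simp_all [SV.p2]
  · rename_i h
    simp only [SV.p2, true_iff]
    exact Δ.neg_of_notMem h

theorem bool_ext {a b : Bool} (h : a = true ↔ b = true) : a = b := by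
  cases a <;> cases b <;> simp_all

theorem canModel : IsModelDmbCcl canR canV := by
  constructor
  · exact canR_serial
  · intro Δ α β
    apply bool_ext
    simp [canV_p1, Bool.and_eq_true, World.and_mem]
  · intro Δ α β
    apply bool_ext
    simp [canV_p1, Bool.or_eq_true, World.or_mem]
  · intro Δ α β
    apply bool_ext
    simp only [canV_p1, Bool.or_eq_true, Bool.not_eq_true', ← Bool.not_eq_true]
    rw [World.imp_mem]
  · intro Δ α
    apply bool_ext
    rw [canV_p1, canV_p2]
  · intro Δ α
    apply bool_ext
    simp only [canV_p1, Bool.not_eq_true', ← Bool.not_eq_true, Bool.and_eq_true,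
      canV_p2]
    rw [World.circ_mem]
  · intro Δ α
    simp only [canV_p1]
    exact obl_mem Δ α
  · intro Δ α h
    have h1 : α ∈ Δ.s := by
      rw [← canV_p1, h]; rfl
    have h2 : α.neg ∈ Δ.s := by
      rw [← canV_p2, h]; rfl
    obtain ⟨hmem, hnmem⟩ := Δ.cl_mem h1 h2
    unfold canV
    rw [if_pos hmem, if_neg hnmem]

end Aux

/-- Completeness of DmbCcl w.r.t. swap Kripke models. -/
theorem DmbCcl_completeness (Γ : Set Form) (φ : Form) :
    SemDmbCcl Γ φ → DerivDmbCcl Γ φ := by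
  intro hsem
  by_contra hnd
  have hder : ¬ Der Γ φ := fun h => hnd (derToDeriv h)
  obtain ⟨Δ₀, hΓ, hw⟩ := lindenbaum hder
  have hval := hsem World canR canV ⟨Δ₀⟩ canModel Δ₀
    (fun γ hγ => (canV_p1 Δ₀ γ).mpr (hΓ hγ))
  have hφ : φ ∈ Δ₀.s := (canV_p1 Δ₀ φ).1 hval
  exact Δ₀.nd (hw ▸ Der.ax hφ)
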